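/- Let G be a graph with at least 3k−2 edges in which every connected component has fewer than k edges. Then G is in (2,k)-LCP. -/

import Mathlib

open Finset

open scoped Classical in
/-- `G ∈ (c,k)`-LCP: there is a `c`-coloring such that each color has at least `k`
monochromatic edges. -/
def LCP {V : Type*} [Fintype V] (G : SimpleGraph V) (c k : ℕ) : Prop :=
  ∃ φ : V → Fin c, ∀ i : Fin c,
    k ≤ (G.edgeFinset.filter (fun e => ∀ v ∈ e, φ v = i)).card

lemma lcp_aux {ι : Type*} (k : ℕ) (f : ι → ℕ) :
    ∀ s : Finset ι, (∀ i ∈ s, f i < k) → k ≤ ∑ i ∈ s, f i →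
    ∃ t ⊆ s, k ≤ ∑ i ∈ t, f i ∧ ∑ i ∈ t, f i ≤ 2 * k - 2 := by
  classical
  intro s
  induction s using Finset.induction with
  | empty =>
    intro _ h
    simp only [Finset.sum_empty, Nat.le_zero] at h
    exact ⟨∅, Finset.Subset.refl _, by simp [h], by simp⟩
  | insert _ _ ha ih =>
    rename_i a s
    intro hf h
    by_cases hks : k ≤ ∑ i ∈ s, f i
    · obtain ⟨t, hts, h1, h2⟩ := ih (fun i hi => hf i (Finset.mem_insert_of_mem hi)) hks
      exact ⟨t, hts.trans (Finset.subset_insert a s), h1, h2⟩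
    · refine ⟨insert a s, Finset.Subset.refl _, ?_, ?_⟩
      · exact h
      · rw [Finset.sum_insert ha] at *
        have h1 : f a < k := hf a (Finset.mem_insert_self a s)
        omega

open scoped Classical in
theorem stmt_13 {V : Type*} [Fintype V] (G : SimpleGraph V) (k : ℕ)
    (hm : 3 * k - 2 ≤ G.edgeFinset.card)
    (hcomp : ∀ C : G.ConnectedComponent,
      (G.edgeFinset.filter (fun e => ∀ v ∈ e, G.connectedComponentMk v = C)).card < k) :
    LCP G 2 k := by
  classical
  set cc : V → G.ConnectedComponent := G.connectedComponentMk with hcc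
  set F : G.ConnectedComponent → Finset (Sym2 V) :=
    fun C => G.edgeFinset.filter (fun e => ∀ v ∈ e, cc v = C) with hF
  have hdisj : ∀ C ∈ (Finset.univ : Finset G.ConnectedComponent),
      ∀ C' ∈ (Finset.univ : Finset G.ConnectedComponent), C ≠ C' →
      Disjoint (F C) (F C') := by
    intro C _ C' _ hne
    refine Finset.disjoint_left.mpr ?_
    intro e he he'
    simp only [hF, Finset.mem_filter] at he he'
    induction e using Sym2.ind with
    | _ a b =>
      have h1 := he.2 a (Sym2.mem_mk_left a b)
      have h2 := he'.2 a (Sym2.mem_mk_left a b)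
      exact hne (h1.symm.trans h2)
  have hmem : ∀ u : Finset G.ConnectedComponent, ∀ e,
      e ∈ u.biUnion F ↔ e ∈ G.edgeFinset ∧ ∀ v ∈ e, cc v ∈ u := by
    intro u e
    induction e using Sym2.ind with
    | _ a b =>
      simp only [Finset.mem_biUnion, hF, Finset.mem_filter, Sym2.mem_iff,
        forall_eq_or_imp, forall_eq]
      constructor
      · rintro ⟨C, hC, he, h1, h2⟩
        exact ⟨he, h1 ▸ hC, h2 ▸ hC⟩
      · rintro ⟨he, h1, h2⟩
        have hadj : G.Adj a b := by
          rwa [SimpleGraph.mem_edgeFinset, SimpleGraph.mem_edgeSet] at he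
        have hab : cc a = cc b := SimpleGraph.ConnectedComponent.sound hadj.reachable
        exact ⟨cc a, h1, he, rfl, hab.symm⟩
  have htotal : G.edgeFinset = (Finset.univ : Finset G.ConnectedComponent).biUnion F := by
    ext e
    rw [hmem]
    simp
  have hcard : G.edgeFinset.card = ∑ C, (F C).card := by
    rw [htotal, Finset.card_biUnion hdisj]
  have hk3 : k ≤ 3 * k - 2 := by omega
  obtain ⟨t, -, h1, h2⟩ := lcp_aux k (fun C => (F C).card) Finset.univ
    (fun C _ => hcomp C) (by show k ≤ ∑ C, (F C).card; omega)
  have hsplit : ∑ C ∈ t, (F C).card + ∑ C ∈ tᶜ, (F C).card = ∑ C, (F C).card :=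
    Finset.sum_add_sum_compl t _
  refine ⟨fun v => if cc v ∈ t then 0 else 1, ?_⟩
  have hcard0 : ∀ u : Finset G.ConnectedComponent,
      (u.biUnion F).card = ∑ C ∈ u, (F C).card := by
    intro u
    exact Finset.card_biUnion (fun C _ C' _ h =>
      hdisj C (Finset.mem_univ _) C' (Finset.mem_univ _) h)
  intro i
  fin_cases i
  · have heq : G.edgeFinset.filter
        (fun e => ∀ v ∈ e, (if cc v ∈ t then (0 : Fin 2) else 1) = 0) = t.biUnion F := by
      ext e
      rw [hmem, Finset.mem_filter]
      refine and_congr_right fun _ => forall₂_congr fun v _ => ?_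
      by_cases h : cc v ∈ t <;> simp [h]
    show k ≤ (G.edgeFinset.filter
        (fun e => ∀ v ∈ e, (if cc v ∈ t then (0 : Fin 2) else 1) = 0)).card
    rw [heq, hcard0]
    omega
  · have heq : G.edgeFinset.filter
        (fun e => ∀ v ∈ e, (if cc v ∈ t then (0 : Fin 2) else 1) = 1) = tᶜ.biUnion F := by
      ext e
      rw [hmem, Finset.mem_filter]
      refine and_congr_right fun _ => forall₂_congr fun v _ => ?_
      by_cases h : cc v ∈ t <;> simp [h]
    show k ≤ (G.edgeFinset.filter
        (fun e => ∀ v ∈ e, (if cc v ∈ t then (0 : Fin 2) else 1) = 1)).card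
    rw [heq, hcard0]
    omega
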